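/- Let A be an N×N nonnegative integer matrix and define c_n(i) by c_0(i)=1 and c_{n+1}(i) = Σ_{k=0}^n c_{n-k}(i) Σ_{j=1}^N A(j,i) c_k(j). Then c_n(i) ≤ ‖A‖_1^n · Catalan(n) for all n and i, where ‖A‖_1 = max_{1≤i≤N} Σ_{j=1}^N A(j,i). -/
import Mathlib


/-- Let `A` be an `N × N` nonnegative integer matrix and define `c n i` by `c 0 i = 1` and
`c (n+1) i = Σ_{k=0}^n c (n-k) i * Σ_j A j i * c k j`.  Then
`c n i ≤ ‖A‖₁ ^ n * catalan n`, where `‖A‖₁ = max_i Σ_j A j i`. -/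
theorem gCatalan_le_norm_pow_catalan {N : ℕ} (A : Fin N → Fin N → ℕ)
    (c : ℕ → Fin N → ℕ) (h0 : ∀ i, c 0 i = 1)
    (hrec : ∀ n i, c (n + 1) i =
      ∑ k ∈ Finset.range (n + 1), c (n - k) i * ∑ j, A j i * c k j) :
    ∀ n i, c n i ≤ (Finset.univ.sup fun i => ∑ j, A j i) ^ n * catalan n := by
  intro n
  induction n using Nat.strong_induction_on with
  | _ n ih =>
    intro i
    match n with
    | 0 => simp [h0]
    | Nat.succ m =>
      rw [hrec]
      set M := Finset.univ.sup fun i => ∑ j, A j i with hM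
      calc ∑ k ∈ Finset.range (m+1), c (m-k) i * ∑ j, A j i * c k j
          ≤ ∑ k ∈ Finset.range (m+1),
              (M ^ (m-k) * catalan (m-k)) * (M * (M ^ k * catalan k)) := by
            apply Finset.sum_le_sum
            intro k hk
            apply Nat.mul_le_mul
            · exact ih (m-k) (by omega) i
            · calc ∑ j, A j i * c k j
                  ≤ ∑ j, A j i * (M ^ k * catalan k) := by
                    apply Finset.sum_le_sum; intro j _
                    exact Nat.mul_le_mul_left _ (ih k (by
                      have := Finset.mem_range.mp hk; omega) j)
                _ = (∑ j, A j i) * (M ^ k * catalan k) := by rw [Finset.sum_mul]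
                _ ≤ M * (M ^ k * catalan k) :=
                    Nat.mul_le_mul_right _ (Finset.le_sup (f := fun i => ∑ j, A j i) (Finset.mem_univ i))
        _ = M ^ (m+1) * ∑ k ∈ Finset.range (m+1), catalan (m-k) * catalan k := by
            rw [Finset.mul_sum]
            apply Finset.sum_congr rfl
            intro k hk
            have hk' : m - k + (1 + k) = m + 1 := by
              have := Finset.mem_range.mp hk; omega
            calc (M ^ (m-k) * catalan (m-k)) * (M * (M ^ k * catalan k))
                = M ^ (m - k + (1 + k)) * (catalan (m-k) * catalan k) := by
                  rw [pow_add, pow_add, pow_one]; ring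
              _ = M ^ (m+1) * (catalan (m-k) * catalan k) := by rw [hk']
        _ = M ^ (m+1) * catalan (m+1) := by
            congr 1
            rw [catalan_succ, ← Fin.sum_univ_eq_sum_range (fun k => catalan (m - k) * catalan k)]
            apply Finset.sum_congr rfl
            intro k _
            exact mul_comm _ _
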